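/- In the allocation graph G^big, any two agents endowed with the same house type belong to the same strongly connected component: if μ^E(a) = μ^E(b), then a and b are in the same SCC of G^big. -/

import Mathlib

/-- Arc of the allocation graph G^big: `(a,b)` is an arc iff `μ a = μE b`. -/
def arcBig {A H : Type*} (μE μ : A → H) (a b : A) : Prop := μ a = μE b

/-- Two agents lie in the same strongly connected component of G^big. -/
def sameSCC {A H : Type*} (μE μ : A → H) (a b : A) : Prop :=
  Relation.ReflTransGen (arcBig μE μ) a b ∧ Relation.ReflTransGen (arcBig μE μ) b a

/-- For each house type, the number of agents allocated it equals the number endowed with it. -/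
def BalancedAlloc {A H : Type*} (μE μ : A → H) : Prop :=
  ∀ h : H, Nat.card {a : A // μ a = h} = Nat.card {a : A // μE a = h}

/-- A directed cycle: a nonempty list of distinct vertices with consecutive arcs,
and an arc from the last vertex back to the first. A single vertex with a
self-loop is a cycle of length 1. -/
def IsCycle {V : Type*} (R : V → V → Prop) (l : List V) : Prop :=
  l ≠ [] ∧ l.Nodup ∧ l.Chain' R ∧ ∀ h : l ≠ [], R (l.getLast h) (l.head h)

/-- A blocking coalition: a nonempty coalition `C` and a reallocation `μ'` of its
own endowments (as multisets) making every member weakly better off and at least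
one member strictly better off, w.r.t. the strict type-preference profile `P`. -/
def Blocking {A H T : Type*} (tp : A → T) (μE μ : A → H)
    (P : T → LinearOrder H) : Prop :=
  ∃ (C : Finset A) (μ' : A → H),
    C.Nonempty ∧
    C.val.map μ' = C.val.map μE ∧
    (∀ a ∈ C, (P (tp a)).le (μ a) (μ' a)) ∧
    (∃ a ∈ C, (P (tp a)).lt (μ a) (μ' a))

/-- The allocation `μ` is rationalizable: some strict type-preference profile places
it in the strong core (no blocking coalition). -/
def Rationalizable {A H T : Type*} (tp : A → T) (μE μ : A → H) : Prop :=
  ∃ P : T → LinearOrder H, ¬ Blocking tp μE μ P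

/-- any two agents endowed with the same house type lie in the same SCC of G^big. -/
theorem stmt4 {A H : Type*} [Fintype A] [Nonempty A] [Fintype H] (μE μ : A → H)
    (hbal : BalancedAlloc μE μ) :
    ∀ a b : A, μE a = μE b → sameSCC μE μ a b := by
  classical
  have key : ∀ a b : A, μE b = μE a → Relation.ReflTransGen (arcBig μE μ) a b := by
    intro a b hab
    set S : Finset A :=
      Finset.univ.filter (fun x => Relation.ReflTransGen (arcBig μE μ) a x) with hS
    set T : Finset H := S.image μ with hT
    have hmemS : ∀ x : A, x ∈ S ↔ Relation.ReflTransGen (arcBig μE μ) a x := by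
      intro x; simp [hS]
    -- closure of S under arcs
    have hclosed : ∀ y : A, μE y ∈ T → y ∈ S := by
      intro y hy
      rcases Finset.mem_image.mp hy with ⟨x, hxS, hxy⟩
      have hx := (hmemS x).mp hxS
      exact (hmemS y).mpr (hx.tail hxy)
    -- cardinalities of fibers
    have hcard : ∀ h : H, (Finset.univ.filter (fun x => μ x = h)).card
        = (Finset.univ.filter (fun x => μE x = h)).card := by
      intro h
      have := hbal h
      simpa [Nat.card_eq_fintype_card, Fintype.card_subtype] using this
    have hsub1 : S ⊆ Finset.univ.filter (fun x => μ x ∈ T) := by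
      intro x hx
      simp only [Finset.mem_filter, Finset.mem_univ, true_and]
      exact Finset.mem_image_of_mem μ hx
    have hsub2 : Finset.univ.filter (fun x => μE x ∈ T) ⊆ S := by
      intro y hy
      simp only [Finset.mem_filter, Finset.mem_univ, true_and] at hy
      exact hclosed y hy
    have hfib : ∀ (f : A → H),
        (Finset.univ.filter (fun x => f x ∈ T)).card
          = ∑ h ∈ T, (Finset.univ.filter (fun x => f x = h)).card := by
      intro f
      rw [Finset.card_eq_sum_card_fiberwise
        (f := f) (s := Finset.univ.filter (fun x => f x ∈ T)) (t := T) (fun x hx => (Finset.mem_filter.mp hx).2)]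
      refine Finset.sum_congr rfl (fun h hh => ?_)
      congr 1
      ext x
      simp only [Finset.mem_filter, Finset.mem_univ, true_and]
      constructor
      · rintro ⟨_, h2⟩; exact h2
      · intro h2; exact ⟨h2 ▸ hh, h2⟩
    have hcardeq : (Finset.univ.filter (fun x => μ x ∈ T)).card
        = (Finset.univ.filter (fun x => μE x ∈ T)).card := by
      rw [hfib μ, hfib μE]
      exact Finset.sum_congr rfl (fun h _ => hcard h)
    have hle : S.card ≤ (Finset.univ.filter (fun x => μE x ∈ T)).card := by
      calc S.card ≤ (Finset.univ.filter (fun x => μ x ∈ T)).card :=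
            Finset.card_le_card hsub1
        _ = _ := hcardeq
    have hSeq : Finset.univ.filter (fun x => μE x ∈ T) = S :=
      Finset.eq_of_subset_of_card_le hsub2 hle
    -- a ∈ S, hence μE a ∈ T, hence μE b ∈ T, hence b ∈ S
    have haS : a ∈ S := (hmemS a).mpr Relation.ReflTransGen.refl
    have haT : μE a ∈ T := by
      have := hSeq ▸ haS
      simpa using (Finset.mem_filter.mp this).2
    have hbS : b ∈ S := hclosed b (hab ▸ haT)
    exact (hmemS b).mp hbS
  intro a b hab
  exact ⟨key a b hab.symm, key b a hab⟩
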